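/- Let φ : ℝ → ℝ be continuously differentiable and strictly increasing, let a ∈ ℝ, l > 0, T ∈ ℝ, and let p₁, p₂ ≥ 1 be integers with reverse-iterate endpoints A_{p_i} < B_{p_i} satisfying φ^[p_i](A_{p_i}) = T and φ^[p_i](B_{p_i}) = T + 2l for i = 1, 2. If {f_n}_{n=0}^∞ is an orthogonal system in L²([a, a+2l]), then the second-generation functions f_n^{p₁,p₂}(t) := f_n(u_{p₁}(u_{p₂}(t))) · w_{p₁}(u_{p₂}(t)) · w_{p₂}(t) satisfy ∫_a^{a+2l} f_m^{p₁,p₂}(t) f_n^{p₁,p₂}(t) dt = 0 for all m ≠ n, so {f_n^{p₁,p₂}}_{n=0}^∞ is again an orthogonal system in L²([a, a+2l]). -/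

import Mathlib

open MeasureTheory Set

/-- The affine map `ρ_p` sending `[a, a+2l]` onto `[A, B]`. -/
noncomputable def rhoMap (A B a l : ℝ) (t : ℝ) : ℝ := (B - A) / (2 * l) * (t - a) + A

/-- The map `u_p(t) = φ^[p](ρ_p(t)) − T + a`. -/
noncomputable def uMap (φ : ℝ → ℝ) (p : ℕ) (A B a l T : ℝ) (t : ℝ) : ℝ :=
  φ^[p] (rhoMap A B a l t) - T + a

/-- The weight `w_p(t) = ∏_{r=0}^{p−1} √(φ′(φ^[r](ρ_p(t))))`. -/
noncomputable def wMap (φ : ℝ → ℝ) (p : ℕ) (A B a l : ℝ) (t : ℝ) : ℝ :=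
  ∏ r ∈ Finset.range p, Real.sqrt (deriv φ (φ^[r] (rhoMap A B a l t)))


lemma sg_deriv_nonneg {φ : ℝ → ℝ} (hφ : ContDiff ℝ 1 φ) (hmono : StrictMono φ) (x : ℝ) :
    0 ≤ deriv φ x := by
  have hd : Differentiable ℝ φ := hφ.differentiable one_ne_zero
  have h : Filter.Tendsto (slope φ x) (nhdsWithin x (Set.Ioi x)) (nhds (deriv φ x)) :=
    (hasDerivAt_iff_tendsto_slope.mp (hd x).hasDerivAt).mono_left
      (nhdsWithin_mono x (fun y hy => by simpa using (Set.mem_Ioi.mp hy).ne'))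
  refine ge_of_tendsto h ?_
  filter_upwards [self_mem_nhdsWithin] with y hy
  rw [slope_def_field]
  exact div_nonneg (sub_nonneg.2 (hmono (Set.mem_Ioi.mp hy)).le)
    (sub_nonneg.2 (Set.mem_Ioi.mp hy).le)

lemma sg_iterate_hasDerivAt {φ : ℝ → ℝ} (hφ : ContDiff ℝ 1 φ) (p : ℕ) (x : ℝ) :
    HasDerivAt (φ^[p]) (∏ r ∈ Finset.range p, deriv φ (φ^[r] x)) x := by
  induction p with
  | zero => simpa using hasDerivAt_id x
  | succ p ih =>
      rw [Function.iterate_succ', Finset.prod_range_succ, mul_comm]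
      exact ((hφ.differentiable one_ne_zero (φ^[p] x)).hasDerivAt).comp x ih

lemma sg_uMap_hasDerivAt {φ : ℝ → ℝ} (hφ : ContDiff ℝ 1 φ) (p : ℕ) (A B a l T t : ℝ) :
    HasDerivAt (uMap φ p A B a l T)
      ((B - A) / (2 * l) * ∏ r ∈ Finset.range p, deriv φ (φ^[r] (rhoMap A B a l t))) t := by
  have h1 : HasDerivAt (rhoMap A B a l) ((B - A) / (2 * l)) t := by
    unfold rhoMap
    simpa using (((hasDerivAt_id t).sub_const a).const_mul ((B - A) / (2 * l))).add_const A
  have h2 := sg_iterate_hasDerivAt hφ p (rhoMap A B a l t)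
  have := ((h2.comp t h1).sub_const T).add_const a
  have e : uMap φ p A B a l T = fun x => φ^[p] (rhoMap A B a l x) - T + a := rfl
  rw [e]
  simpa [mul_comm] using this

lemma sg_wMap_sq {φ : ℝ → ℝ} (hφ : ContDiff ℝ 1 φ) (hmono : StrictMono φ)
    (p : ℕ) (A B a l t : ℝ) :
    (wMap φ p A B a l t) ^ 2
      = ∏ r ∈ Finset.range p, deriv φ (φ^[r] (rhoMap A B a l t)) := by
  unfold wMap
  rw [← Finset.prod_pow]
  exact Finset.prod_congr rfl fun r _ => Real.sq_sqrt (sg_deriv_nonneg hφ hmono _)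

lemma sg_uMap_strictMono {φ : ℝ → ℝ} (hmono : StrictMono φ) {A B l : ℝ} (hl : 0 < l)
    (hAB : A < B) (p : ℕ) (a T : ℝ) : StrictMono (uMap φ p A B a l T) := by
  have hc : 0 < (B - A) / (2 * l) := div_pos (by linarith) (by linarith)
  intro x y hxy
  have hr : rhoMap A B a l x < rhoMap A B a l y := by
    unfold rhoMap
    have := mul_lt_mul_of_pos_left (sub_lt_sub_right hxy a) hc
    linarith
  have := hmono.iterate p hr
  unfold uMap
  linarith

lemma sg_uMap_continuous {φ : ℝ → ℝ} (hφ : ContDiff ℝ 1 φ) (p : ℕ) (A B a l T : ℝ) :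
    Continuous (uMap φ p A B a l T) := by
  unfold uMap rhoMap
  exact (((hφ.continuous.iterate p).comp (by continuity)).sub continuous_const).add
    continuous_const

lemma sg_uMap_image {φ : ℝ → ℝ} (hφ : ContDiff ℝ 1 φ) (hmono : StrictMono φ)
    {A B l : ℝ} (hl : 0 < l) (hAB : A < B) (p : ℕ) (a T : ℝ)
    (hA : φ^[p] A = T) (hB : φ^[p] B = T + 2 * l) :
    uMap φ p A B a l T '' Set.Ioc a (a + 2 * l) = Set.Ioc a (a + 2 * l) := by
  have hsm := sg_uMap_strictMono hmono hl hAB p a T (φ := φ)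
  have hua : uMap φ p A B a l T a = a := by
    unfold uMap rhoMap; simp [hA]
  have hub : uMap φ p A B a l T (a + 2 * l) = a + 2 * l := by
    unfold uMap rhoMap
    have h : (B - A) / (2 * l) * (a + 2 * l - a) + A = B := by
      field_simp
      ring
    rw [h, hB]; ring
  apply Set.Subset.antisymm
  · rintro _ ⟨x, hx, rfl⟩
    have h1 := hsm hx.1
    have h2 := hsm.monotone hx.2
    rw [hua] at h1
    rw [hub] at h2
    exact ⟨h1, h2⟩
  · have h := intermediate_value_Ioc (by linarith : a ≤ a + 2 * l)
      (sg_uMap_continuous hφ p A B a l T).continuousOn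
    rw [hua, hub] at h
    exact h

lemma sg_key {φ : ℝ → ℝ} (hφ : ContDiff ℝ 1 φ) (hmono : StrictMono φ)
    {A B l : ℝ} (hl : 0 < l) (hAB : A < B) (p : ℕ) (a T : ℝ)
    (hA : φ^[p] A = T) (hB : φ^[p] B = T + 2 * l) (g : ℝ → ℝ) :
    ∫ t in Set.Ioc a (a + 2 * l), g (uMap φ p A B a l T t) * (wMap φ p A B a l t) ^ 2
      = (2 * l / (B - A)) * ∫ s in Set.Ioc a (a + 2 * l), g s := by
  have hc : 0 < (B - A) / (2 * l) := div_pos (by linarith) (by linarith)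
  have hcov := integral_image_eq_integral_abs_deriv_smul (s := Set.Ioc a (a + 2 * l)) (measurableSet_Ioc)
    (fun x _ => (sg_uMap_hasDerivAt hφ p A B a l T x).hasDerivWithinAt)
    ((sg_uMap_strictMono hmono hl hAB p a T).injective.injOn) g
  rw [sg_uMap_image hφ hmono hl hAB p a T hA hB] at hcov
  have hone : 2 * l / (B - A) * ((B - A) / (2 * l)) = 1 := by
    have h1 : B - A ≠ 0 := by linarith
    have h2 : l ≠ 0 := by linarith
    field_simp
  calc ∫ t in Set.Ioc a (a + 2 * l), g (uMap φ p A B a l T t) * (wMap φ p A B a l t) ^ 2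
      = ∫ t in Set.Ioc a (a + 2 * l), (2 * l / (B - A)) *
          (|(B - A) / (2 * l) * ∏ r ∈ Finset.range p, deriv φ (φ^[r] (rhoMap A B a l t))| •
            g (uMap φ p A B a l T t)) := by
        refine integral_congr_ae (Filter.Eventually.of_forall fun t => ?_)
        have hprod : 0 ≤ ∏ r ∈ Finset.range p, deriv φ (φ^[r] (rhoMap A B a l t)) :=
          Finset.prod_nonneg fun r _ => sg_deriv_nonneg hφ hmono _
        simp only [smul_eq_mul]
        rw [abs_of_nonneg (mul_nonneg hc.le hprod), sg_wMap_sq hφ hmono p A B a l t]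
        have hBA : B - A ≠ 0 := by linarith
        have hl' : l ≠ 0 := by linarith
        field_simp
      _ = (2 * l / (B - A)) * ∫ t in Set.Ioc a (a + 2 * l),
          |(B - A) / (2 * l) * ∏ r ∈ Finset.range p, deriv φ (φ^[r] (rhoMap A B a l t))| •
            g (uMap φ p A B a l T t) := integral_const_mul _ _
      _ = (2 * l / (B - A)) * ∫ s in Set.Ioc a (a + 2 * l), g s := by rw [← hcov]

/-- The second-generation transform of an `L²`-orthogonal system on
`[a, a+2l]` is again an orthogonal system in `L²([a, a+2l])`. -/
theorem second_generation_orthogonal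
    (φ : ℝ → ℝ) (hφ : ContDiff ℝ 1 φ) (hmono : StrictMono φ)
    (a l T : ℝ) (hl : 0 < l) (p₁ p₂ : ℕ) (hp₁ : 1 ≤ p₁) (hp₂ : 1 ≤ p₂)
    (A₁ B₁ A₂ B₂ : ℝ) (hAB₁ : A₁ < B₁) (hAB₂ : A₂ < B₂)
    (hA₁ : φ^[p₁] A₁ = T) (hB₁ : φ^[p₁] B₁ = T + 2 * l)
    (hA₂ : φ^[p₂] A₂ = T) (hB₂ : φ^[p₂] B₂ = T + 2 * l)
    (f : ℕ → ℝ → ℝ)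
    (hf : ∀ n, MemLp (f n) 2 (volume.restrict (Set.Ioc a (a + 2 * l))))
    (horth : ∀ m n, m ≠ n → ∫ t in a..(a + 2 * l), f m t * f n t = 0) :
    ∀ m n, m ≠ n →
      ∫ t in a..(a + 2 * l),
        (f m (uMap φ p₁ A₁ B₁ a l T (uMap φ p₂ A₂ B₂ a l T t)) *
            wMap φ p₁ A₁ B₁ a l (uMap φ p₂ A₂ B₂ a l T t) * wMap φ p₂ A₂ B₂ a l t) *
        (f n (uMap φ p₁ A₁ B₁ a l T (uMap φ p₂ A₂ B₂ a l T t)) *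
            wMap φ p₁ A₁ B₁ a l (uMap φ p₂ A₂ B₂ a l T t) * wMap φ p₂ A₂ B₂ a l t) = 0 := by
  intro m n hmn
  have hle : a ≤ a + 2 * l := by linarith
  have h0 : ∫ t in Set.Ioc a (a + 2 * l), f m t * f n t = 0 := by
    have := horth m n hmn
    rwa [intervalIntegral.integral_of_le hle] at this
  set g₂ : ℝ → ℝ := fun s =>
    (f m (uMap φ p₁ A₁ B₁ a l T s) * f n (uMap φ p₁ A₁ B₁ a l T s)) *
      (wMap φ p₁ A₁ B₁ a l s) ^ 2 with hg₂
  rw [intervalIntegral.integral_of_le hle]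
  have hfun : (fun t =>
      (f m (uMap φ p₁ A₁ B₁ a l T (uMap φ p₂ A₂ B₂ a l T t)) *
          wMap φ p₁ A₁ B₁ a l (uMap φ p₂ A₂ B₂ a l T t) * wMap φ p₂ A₂ B₂ a l t) *
      (f n (uMap φ p₁ A₁ B₁ a l T (uMap φ p₂ A₂ B₂ a l T t)) *
          wMap φ p₁ A₁ B₁ a l (uMap φ p₂ A₂ B₂ a l T t) * wMap φ p₂ A₂ B₂ a l t))
      = fun t => g₂ (uMap φ p₂ A₂ B₂ a l T t) * (wMap φ p₂ A₂ B₂ a l t) ^ 2 := by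
    funext t
    simp only [hg₂]
    ring
  rw [hfun, sg_key hφ hmono hl hAB₂ p₂ a T hA₂ hB₂ g₂]
  have h1 : ∫ s in Set.Ioc a (a + 2 * l), g₂ s
      = (2 * l / (B₁ - A₁)) * ∫ s in Set.Ioc a (a + 2 * l), f m s * f n s := by
    have := sg_key hφ hmono hl hAB₁ p₁ a T hA₁ hB₁ (fun s => f m s * f n s)
    simpa [hg₂] using this
  rw [h1, h0]
  ring
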